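/- Let x₀ ∈ ℝⁿ₊ be feasible for Ax = b₀ with support I. Then x₀ is a sharp solution of the nonnegative ℓ₁ problem min{‖x‖₁ : Ax = b₀, x ≥ 0} if and only if for every h ∈ Ker A \ {0}, either hᵢ < 0 for some i ∉ I, or (h_{I^c} ≥ 0 implies Σ_{i∈I} hᵢ + Σ_{i∈I^c} hᵢ > 0). -/
import Mathlib


open Set
open scoped Classical

private lemma coord_abs_le_norm {n : ℕ} (h : EuclideanSpace ℝ (Fin n)) (i : Fin n) :
    |h i| ≤ ‖h‖ := by
  rw [EuclideanSpace.norm_eq]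
  rw [show |h i| = Real.sqrt (|h i| ^ 2) by rw [Real.sqrt_sq_eq_abs, abs_abs]]
  apply Real.sqrt_le_sqrt
  exact Finset.single_le_sum (f := fun j => ‖h j‖ ^ 2) (fun j _ => sq_nonneg _)
    (Finset.mem_univ i)

/-- Let `x₀ ≥ 0` be feasible for `Ax = b₀` with support `I`. Then `x₀`
is a sharp solution of `min {‖x‖₁ : Ax = b₀, x ≥ 0}` iff for every `h ∈ Ker A \ {0}`,
either `hᵢ < 0` for some `i ∉ I`, or (`h_{I^c} ≥ 0` implies `Σ_{i∈I} hᵢ + Σ_{i∈I^c} hᵢ > 0`). -/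
theorem nonneg_l1_sharp_solution_characterization
    (n m : ℕ)
    (l1 : EuclideanSpace ℝ (Fin n) → ℝ) (hl1 : ∀ x, l1 x = ∑ i, |x i|)
    (A : EuclideanSpace ℝ (Fin n) →L[ℝ] EuclideanSpace ℝ (Fin m))
    (b₀ : EuclideanSpace ℝ (Fin m))
    (x₀ : EuclideanSpace ℝ (Fin n)) (hpos : ∀ i, 0 ≤ x₀ i) (hfeas : A x₀ = b₀)
    (I : Finset (Fin n)) (hI : I = Finset.univ.filter (fun i => x₀ i ≠ 0)) :
    (∃ κ > (0 : ℝ), ∃ δ > (0 : ℝ), ∀ x, A x = b₀ → (∀ i, 0 ≤ x i) → ‖x - x₀‖ ≤ δ →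
        κ * ‖x - x₀‖ ≤ l1 x - l1 x₀) ↔
      (∀ h : EuclideanSpace ℝ (Fin n), A h = 0 → h ≠ 0 →
        (∃ i ∉ I, h i < 0) ∨ ((∀ i ∉ I, 0 ≤ h i) → 0 < ∑ i ∈ I, h i + ∑ i ∈ Iᶜ, h i)) := by
  have hIc0 : ∀ i, i ∉ I → x₀ i = 0 := by
    intro i hi
    by_contra hne
    exact hi (hI ▸ Finset.mem_filter.mpr ⟨Finset.mem_univ i, hne⟩)
  have hIpos : ∀ i ∈ I, 0 < x₀ i := by
    intro i hi
    rw [hI] at hi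
    exact lt_of_le_of_ne (hpos i) (Ne.symm (Finset.mem_filter.mp hi).2)
  have hsum : ∀ f : Fin n → ℝ, ∑ i ∈ I, f i + ∑ i ∈ Iᶜ, f i = ∑ i, f i :=
    fun f => Finset.sum_add_sum_compl I f
  have hdiff : ∀ x : EuclideanSpace ℝ (Fin n), (∀ i, 0 ≤ x i) →
      l1 x - l1 x₀ = ∑ i, (x i - x₀ i) := by
    intro x hx
    rw [hl1, hl1, ← Finset.sum_sub_distrib]
    exact Finset.sum_congr rfl fun i _ => by
      rw [abs_of_nonneg (hx i), abs_of_nonneg (hpos i)]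
  constructor
  · rintro ⟨κ, hκ, δ, hδ, hsharp⟩ h hker hne
    by_cases hcase : ∃ i ∉ I, h i < 0
    · exact Or.inl hcase
    push_neg at hcase
    refine Or.inr fun _ => ?_
    rw [hsum]
    have hnorm : 0 < ‖h‖ := norm_pos_iff.mpr hne
    set s : Finset ℝ := insert δ (I.image fun i => x₀ i) with hs
    have hsne : s.Nonempty := ⟨δ, Finset.mem_insert_self _ _⟩
    set c := s.min' hsne with hc
    have hcpos : 0 < c := by
      rw [hc, Finset.lt_min'_iff]
      intro b hb
      rcases Finset.mem_insert.mp hb with rfl | hb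
      · exact hδ
      · obtain ⟨i, hi, rfl⟩ := Finset.mem_image.mp hb
        exact hIpos i hi
    have hcδ : c ≤ δ := Finset.min'_le s δ (Finset.mem_insert_self _ _)
    have hcx : ∀ i ∈ I, c ≤ x₀ i := fun i hi =>
      Finset.min'_le s (x₀ i) (Finset.mem_insert_of_mem (Finset.mem_image_of_mem _ hi))
    set t : ℝ := c / ‖h‖ with ht
    have htpos : 0 < t := div_pos hcpos hnorm
    have htnorm : t * ‖h‖ = c := div_mul_cancel₀ c (ne_of_gt hnorm)
    set x : EuclideanSpace ℝ (Fin n) := x₀ + t • h with hx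
    have hxi : ∀ i, x i = x₀ i + t * h i := fun i => rfl
    have hxpos : ∀ i, 0 ≤ x i := by
      intro i
      rw [hxi]
      by_cases hiI : i ∈ I
      · have h1 : |h i| ≤ ‖h‖ := coord_abs_le_norm h i
        have h2 : -(t * ‖h‖) ≤ t * h i := by
          have := neg_abs_le (h i)
          nlinarith [abs_nonneg (h i)]
        have := hcx i hiI
        nlinarith
      · have := hcase i hiI
        rw [hIc0 i hiI]
        positivity
    have hAx : A x = b₀ := by
      rw [hx, map_add, map_smul, hker, smul_zero, add_zero, hfeas]
    have hxx₀ : x - x₀ = t • h := by rw [hx]; abel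
    have hnx : ‖x - x₀‖ = c := by
      rw [hxx₀, norm_smul, Real.norm_eq_abs, abs_of_pos htpos, htnorm]
    have := hsharp x hAx hxpos (by rw [hnx]; exact hcδ)
    rw [hnx, hdiff x hxpos] at this
    have hsx : ∑ i, (x i - x₀ i) = t * ∑ i, h i := by
      rw [Finset.mul_sum]
      exact Finset.sum_congr rfl fun i _ => by rw [hxi]; ring
    rw [hsx] at this
    nlinarith
  · intro hcond
    have key : ∀ h : EuclideanSpace ℝ (Fin n), A h = 0 → (∀ i ∉ I, 0 ≤ h i) → h ≠ 0 →
        0 < ∑ i, h i := by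
      intro h hker hnn hne
      rcases hcond h hker hne with ⟨i, hi, hlt⟩ | hr
      · exact absurd (hnn i hi) (not_le.mpr hlt)
      · rw [← hsum h]; exact hr hnn
    set S : Set (EuclideanSpace ℝ (Fin n)) :=
      {h | ‖h‖ = 1 ∧ A h = 0 ∧ ∀ i ∉ I, 0 ≤ h i} with hS
    have hScompact : IsCompact S := by
      have hEq : S = Metric.sphere (0 : EuclideanSpace ℝ (Fin n)) 1 ∩
          ({h | A h = 0} ∩ {h | ∀ i ∉ I, 0 ≤ h i}) := by
        ext h
        simp [hS, mem_sphere_iff_norm, and_assoc]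
      rw [hEq]
      refine (isCompact_sphere 0 1).inter_right (IsClosed.inter ?_ ?_)
      · exact isClosed_singleton.preimage A.continuous
      · have : {h : EuclideanSpace ℝ (Fin n) | ∀ i ∉ I, 0 ≤ h i} =
            ⋂ i, ⋂ (_ : i ∉ I), {h : EuclideanSpace ℝ (Fin n) | 0 ≤ h i} := by
          ext h; simp
        rw [this]
        exact isClosed_iInter fun i => isClosed_iInter fun _ =>
          isClosed_le continuous_const (EuclideanSpace.proj i).continuous
    have hfcont : Continuous fun h : EuclideanSpace ℝ (Fin n) => ∑ i, h i :=
      continuous_finset_sum _ fun i _ => (EuclideanSpace.proj i).continuous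
    -- main bound for a given κ that works on S
    have main : ∀ κ : ℝ, 0 < κ → (∀ u ∈ S, κ ≤ ∑ i, u i) →
        ∀ x, A x = b₀ → (∀ i, 0 ≤ x i) → ‖x - x₀‖ ≤ 1 →
          κ * ‖x - x₀‖ ≤ l1 x - l1 x₀ := by
      intro κ hκ hκS x hAx hxpos _
      have hdi : ∀ i, (x - x₀) i = x i - x₀ i := fun i => rfl
      have hdsum : l1 x - l1 x₀ = ∑ i, (x - x₀) i :=
        (hdiff x hxpos).trans (Finset.sum_congr rfl fun i _ => (hdi i).symm)
      by_cases hzero : x - x₀ = 0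
      · rw [hzero, norm_zero, mul_zero, hdsum, hzero]
        simp
      · have hnorm : 0 < ‖x - x₀‖ := norm_pos_iff.mpr hzero
        set h : EuclideanSpace ℝ (Fin n) := x - x₀ with hh
        set u : EuclideanSpace ℝ (Fin n) := ‖h‖⁻¹ • h with hu
        have huS : u ∈ S := by
          refine ⟨norm_smul_inv_norm hzero, ?_, ?_⟩
          · rw [hu, map_smul]
            have : A h = 0 := by
              rw [hh, map_sub, hAx, hfeas, sub_self]
            rw [this, smul_zero]
          · intro i hi
            have hhi : 0 ≤ h i := by
              rw [hdi i, hIc0 i hi, sub_zero]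
              exact hxpos i
            have : u i = ‖h‖⁻¹ * h i := rfl
            rw [this]
            positivity
        have husum : ∑ i, u i = ‖h‖⁻¹ * ∑ i, h i := by
          rw [Finset.mul_sum]
          exact Finset.sum_congr rfl fun i _ => rfl
        have := hκS u huS
        rw [husum] at this
        rw [hdsum]
        calc κ * ‖x - x₀‖ ≤ (‖h‖⁻¹ * ∑ i, h i) * ‖h‖ := by
              rw [hh]
              exact mul_le_mul_of_nonneg_right this (le_of_lt hnorm)
          _ = ∑ i, h i := by field_simp
          _ = ∑ i, (x - x₀) i := rfl
    by_cases hSne : S.Nonempty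
    · obtain ⟨u₀, hu₀S, hmin⟩ :=
        hScompact.exists_isMinOn hSne hfcont.continuousOn
      have hκpos : 0 < ∑ i, u₀ i := by
        apply key u₀ hu₀S.2.1 hu₀S.2.2
        intro h0
        rw [h0] at hu₀S
        simp [hS] at hu₀S
      exact ⟨∑ i, u₀ i, hκpos, 1, one_pos,
        main _ hκpos fun u huS => hmin huS⟩
    · refine ⟨1, one_pos, 1, one_pos, main 1 one_pos ?_⟩
      intro u huS
      exact absurd ⟨u, huS⟩ hSne
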